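/- If S is a locally maximal product-free set in a finite group G, then |G| ≤ 2·|T(S)|·|⟨S⟩|, where T(S) = S ∪ SS ∪ SS⁻¹ ∪ S⁻¹S. -/

import Mathlib

open scoped Pointwise

def productFree {G : Type*} [Group G] (S : Set G) : Prop :=
  ∀ a ∈ S, ∀ b ∈ S, a * b ∉ S

def locallyMaximalPF {G : Type*} [Group G] (S : Set G) : Prop :=
  productFree S ∧ ∀ T : Set G, productFree T → S ⊆ T → T = S

theorem stmt2 {G : Type*} [Group G] [Fintype G] (S : Set G) (hne : S.Nonempty)
    (h : locallyMaximalPF S) :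
    Nat.card G ≤ 2 * (S ∪ S * S ∪ S * S⁻¹ ∪ S⁻¹ * S).ncard * Nat.card (Subgroup.closure S) := by
  classical
  obtain ⟨hPF, hmax⟩ := h
  set T : Set G := S ∪ S * S ∪ S * S⁻¹ ∪ S⁻¹ * S with hTdef
  set H : Subgroup G := Subgroup.closure S with hHdef
  obtain ⟨s₀, hs₀⟩ := hne
  have h1S : (1 : G) ∉ S := fun h1 => hPF 1 h1 1 h1 (by simpa using h1)
  have hST : S ⊆ T := fun x hx => Or.inl (Or.inl (Or.inl hx))
  have hSST : S * S ⊆ T := fun x hx => Or.inl (Or.inl (Or.inr hx))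
  have hSSiT : S * S⁻¹ ⊆ T := fun x hx => Or.inl (Or.inr hx)
  have hSiST : S⁻¹ * S ⊆ T := fun x hx => Or.inr hx
  have hs₀i : s₀⁻¹ ∈ S⁻¹ := by rw [Set.mem_inv]; simpa using hs₀
  have h1T : (1 : G) ∈ T := hSSiT (by
    have : s₀ * s₀⁻¹ = (1 : G) := by group
    exact this ▸ Set.mul_mem_mul hs₀ hs₀i)
  -- every element outside T squares into S
  have hsq : ∀ g : G, g ∉ T → g * g ∈ S := by
    intro g hgT
    by_contra hgg
    have hgS : g ∉ S := fun hx => hgT (hST hx)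
    have hPF' : productFree (insert g S) := by
      intro a ha b hb hab
      rcases Set.mem_insert_iff.mp ha with rfl | haS
      · rcases Set.mem_insert_iff.mp hb with rfl | hbS
        · rcases Set.mem_insert_iff.mp hab with h1 | h2
          · exact hgT (mul_eq_left.mp h1 ▸ h1T)
          · exact hgg h2
        · rcases Set.mem_insert_iff.mp hab with h1 | h2
          · exact h1S (mul_eq_left.mp h1 ▸ hbS)
          · -- a*b ∈ S, so a = (a*b)*b⁻¹ ∈ S * S⁻¹
            have hb' : b⁻¹ ∈ S⁻¹ := by rw [Set.mem_inv]; simpa using hbS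
            have : (a * b) * b⁻¹ = a := by group
            exact hgT (hSSiT (this ▸ Set.mul_mem_mul h2 hb'))
      · rcases Set.mem_insert_iff.mp hb with rfl | hbS
        · rcases Set.mem_insert_iff.mp hab with h1 | h2
          · exact h1S (mul_eq_right.mp h1 ▸ haS)
          · have ha' : a⁻¹ ∈ S⁻¹ := by rw [Set.mem_inv]; simpa using haS
            have : a⁻¹ * (a * b) = b := by group
            exact hgT (hSiST (this ▸ Set.mul_mem_mul ha' h2))
        · rcases Set.mem_insert_iff.mp hab with h1 | h2
          · exact hgT (hSST (h1 ▸ Set.mul_mem_mul haS hbS))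
          · exact hPF a haS b hbS h2
    have heq := hmax (insert g S) hPF' (Set.subset_insert g S)
    exact hgS (heq ▸ Set.mem_insert g S)
  -- T is inside the closure
  have hSH : S ⊆ (H : Set G) := Subgroup.subset_closure
  have hTH : T ⊆ (H : Set G) := by
    intro x hx
    rcases hx with ((hx | hx) | hx) | hx
    · exact hSH hx
    · rw [Set.mem_mul] at hx
      obtain ⟨a, ha, b, hb, rfl⟩ := hx
      exact mul_mem (hSH ha) (hSH hb)
    · rw [Set.mem_mul] at hx
      obtain ⟨a, ha, b, hb, rfl⟩ := hx
      exact mul_mem (hSH ha) ((H.inv_mem_iff).mp (hSH (Set.mem_inv.mp hb)))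
    · rw [Set.mem_mul] at hx
      obtain ⟨a, ha, b, hb, rfl⟩ := hx
      exact mul_mem ((H.inv_mem_iff).mp (hSH (Set.mem_inv.mp ha))) (hSH hb)
  have hout : ∀ g : G, g ∉ H → g * g ∈ S := fun g hg =>
    hsq g (fun hT' => hg (hTH hT'))
  -- finiteness bookkeeping
  have hTpos : 1 ≤ T.ncard := by
    rw [Nat.one_le_iff_ne_zero, ← Nat.pos_iff_ne_zero]
    exact (Set.ncard_pos (Set.toFinite T)).mpr ⟨1, h1T⟩
  have hcardG : Nat.card G = (Finset.univ : Finset G).card := by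
    rw [Nat.card_eq_fintype_card, Finset.card_univ]
  set Hs : Finset G := (H : Set G).toFinset with hHs
  have hcardH : Nat.card H = Hs.card := by
    rw [Nat.card_eq_fintype_card, hHs, Set.toFinset_card]
    rfl
  by_cases hcase : ∃ u : G, u ∉ H
  · obtain ⟨u, huH⟩ := hcase
    have hu2 : u * u ∈ S := hout u huH
    -- u⁻¹ ∈ u • H, so: u * x ∈ H → x ∈ u • H
    have hmemuH : ∀ x : G, u * x ∈ H → ∃ k ∈ H, x = u * k := by
      intro x hx
      refine ⟨(u * u)⁻¹ * (u * x), mul_mem (H.inv_mem_iff.mpr (hSH hu2)) hx, ?_⟩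
      group
    -- centralizer is contained in H ∪ uH
    have hcent : ∀ x : G, u * x = x * u → (x ∈ H ∨ ∃ k ∈ H, x = u * k) := by
      intro x hcomm
      by_contra hx
      push_neg at hx
      obtain ⟨hx1, hx2⟩ := hx
      have hxx : x * x ∈ S := hout x hx1
      have huxH : u * x ∉ H := by
        intro hmem
        obtain ⟨k, hk, hxk⟩ := hmemuH x hmem
        exact hx2 k hk hxk
      have hux2 : (u * x) * (u * x) ∈ S := hout (u * x) huxH
      have hrw : (u * x) * (u * x) = (u * u) * (x * x) := by
        have e1 : (u * x) * (u * x) = u * (x * u) * x := by group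
        rw [e1, ← hcomm]
        group
      exact hPF (u * u) hu2 (x * x) hxx (hrw ▸ hux2)
    -- the coset uH as a finset
    set uHs : Finset G := Hs.image (fun k => u * k) with huHs
    have huHcard : uHs.card = Hs.card := Finset.card_image_of_injective _ (mul_right_injective u)
    set A : Finset G := Hs ∪ uHs with hA
    have hAcard : A.card ≤ 2 * Hs.card := by
      calc A.card ≤ Hs.card + uHs.card := Finset.card_union_le _ _
      _ = 2 * Hs.card := by rw [huHcard]; ring
    -- membership translation for A
    have hmemA : ∀ x : G, x ∉ A → x ∉ H ∧ ¬(∃ k ∈ H, x = u * k) := by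
      intro x hxA
      constructor
      · intro hmem
        exact hxA (Finset.mem_union_left _ (by rw [hHs, Set.mem_toFinset]; exact hmem))
      · rintro ⟨k, hk, rfl⟩
        exact hxA (Finset.mem_union_right _ (Finset.mem_image.mpr
          ⟨k, by rw [hHs, Set.mem_toFinset]; exact hk, rfl⟩))
    set D : Finset G := Finset.univ \ A with hD
    -- the Γ map
    set f : G → G := fun v => ((u * v) * (u * v)) * ((v * v))⁻¹ with hf
    have hfval : ∀ v ∈ D, f v ∈ S * S⁻¹ := by
      intro v hv
      have hv' := hmemA v (Finset.mem_sdiff.mp hv).2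
      have hv2 : v * v ∈ S := hout v hv'.1
      have huvH : u * v ∉ H := fun hmem => hv'.2 (hmemuH v hmem)
      have huv2 : (u * v) * (u * v) ∈ S := hout (u * v) huvH
      have : (v * v)⁻¹ ∈ S⁻¹ := by rw [Set.mem_inv]; simpa using hv2
      exact Set.mul_mem_mul huv2 this
    -- fibers of f are contained in cosets of the centralizer, hence have size ≤ 2|H|
    have hfiber : ∀ c ∈ D.image f, (D.filter (fun v => f v = c)).card ≤ 2 * Hs.card := by
      intro c hc
      rcases Finset.eq_empty_or_nonempty (D.filter (fun v => f v = c)) with he | ⟨v₀, hv₀⟩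
      · rw [he]; simp
      · have hv₀f := (Finset.mem_filter.mp hv₀).2
        have hsub : D.filter (fun v => f v = c) ⊆ A.image (fun k => v₀ * k) := by
          intro v hv
          have hvf := (Finset.mem_filter.mp hv).2
          -- f v = f v₀ gives v*u*v⁻¹ = v₀*u*v₀⁻¹
          have hkey : v * u * v⁻¹ = v₀ * u * v₀⁻¹ := by
            have e : ∀ w : G, f w = u * (w * u * w⁻¹) := by
              intro w; rw [hf]; group
            have := (e v) ▸ hvf
            have h2 := (e v₀) ▸ hv₀f
            exact mul_left_cancel (this.trans h2.symm)
          -- w := v₀⁻¹ * v commutes with u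
          have hcomm : u * (v₀⁻¹ * v) = (v₀⁻¹ * v) * u := by
            have : v₀⁻¹ * (v * u * v⁻¹) * v = v₀⁻¹ * (v₀ * u * v₀⁻¹) * v := by rw [hkey]
            calc u * (v₀⁻¹ * v) = v₀⁻¹ * (v₀ * u * v₀⁻¹) * v := by group
            _ = v₀⁻¹ * (v * u * v⁻¹) * v := by rw [hkey]
            _ = (v₀⁻¹ * v) * u := by group
          rcases hcent (v₀⁻¹ * v) hcomm with hmem | ⟨k, hk, hek⟩
          · refine Finset.mem_image.mpr ⟨v₀⁻¹ * v, Finset.mem_union_left _ ?_, by group⟩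
            rw [hHs, Set.mem_toFinset]; exact hmem
          · refine Finset.mem_image.mpr ⟨v₀⁻¹ * v, Finset.mem_union_right _ ?_, by group⟩
            rw [huHs]
            exact Finset.mem_image.mpr ⟨k, by rw [hHs, Set.mem_toFinset]; exact hk, hek.symm⟩
        calc (D.filter (fun v => f v = c)).card ≤ (A.image (fun k => v₀ * k)).card :=
              Finset.card_le_card hsub
        _ ≤ A.card := Finset.card_image_le
        _ ≤ 2 * Hs.card := hAcard
    have hDcount : D.card ≤ (2 * Hs.card) * (D.image f).card :=
      Finset.card_le_mul_card_image D (2 * Hs.card) hfiber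
    -- image of f is inside S * S⁻¹
    have himg : (D.image f).card ≤ (S * S⁻¹).ncard := by
      rw [Set.ncard_eq_toFinset_card']
      apply Finset.card_le_card
      intro c hc
      obtain ⟨v, hv, rfl⟩ := Finset.mem_image.mp hc
      rw [Set.mem_toFinset]
      exact hfval v hv
    -- disjointness:  S and S*S⁻¹ are disjoint
    have hdisj : Disjoint S (S * S⁻¹) := by
      rw [Set.disjoint_left]
      intro a ha hmem
      rw [Set.mem_mul] at hmem
      obtain ⟨b, hb, c, hc, hbc⟩ := hmem
      have hc' : c⁻¹ ∈ S := Set.mem_inv.mp hc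
      have : a * c⁻¹ = b := by rw [← hbc]; group
      exact hPF a ha c⁻¹ hc' (this ▸ hb)
    have hTbound : (S * S⁻¹).ncard + 1 ≤ T.ncard := by
      have hsub : S ∪ S * S⁻¹ ⊆ T := Set.union_subset hST hSSiT
      have h1 : (S ∪ S * S⁻¹).ncard = S.ncard + (S * S⁻¹).ncard :=
        Set.ncard_union_eq hdisj (Set.toFinite _) (Set.toFinite _)
      have hS1 : 1 ≤ S.ncard := (Set.ncard_pos (Set.toFinite S)).mpr ⟨s₀, hs₀⟩
      calc (S * S⁻¹).ncard + 1 ≤ (S * S⁻¹).ncard + S.ncard := by omega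
      _ = (S ∪ S * S⁻¹).ncard := by omega
      _ ≤ T.ncard := Set.ncard_le_ncard hsub (Set.toFinite T)
    -- final count
    have hsplit : (Finset.univ : Finset G).card = D.card + A.card := by
      rw [hD]
      exact (Finset.card_sdiff_add_card_eq_card (Finset.subset_univ A)).symm
    calc Nat.card G = D.card + A.card := by rw [hcardG, hsplit]
    _ ≤ (2 * Hs.card) * (D.image f).card + 2 * Hs.card := Nat.add_le_add hDcount hAcard
    _ ≤ (2 * Hs.card) * (S * S⁻¹).ncard + 2 * Hs.card :=
        Nat.add_le_add_right (Nat.mul_le_mul_left _ himg) _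
    _ = 2 * ((S * S⁻¹).ncard + 1) * Hs.card := by ring
    _ ≤ 2 * T.ncard * Hs.card := by
        apply Nat.mul_le_mul_right
        exact Nat.mul_le_mul_left 2 hTbound
    _ = 2 * T.ncard * Nat.card H := by rw [hcardH]
  · push_neg at hcase
    have hHtop : H = ⊤ := by
      ext x; simpa using hcase x
    have : Nat.card H = Nat.card G := by
      rw [hHtop]
      exact Nat.card_congr Subgroup.topEquiv.toEquiv
    rw [← this]
    calc Nat.card H = 1 * Nat.card H := (one_mul _).symm
    _ ≤ 2 * T.ncard * Nat.card H := by
        apply Nat.mul_le_mul_right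
        omega
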